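/- Let G be a simple 6-regular graph. Then every multigraph in the Δ-YY equivalence class of G has all connections of size at most 2. -/

import Mathlib

open scoped Classical

noncomputable section

/-- A multigraph: a finite vertex type together with a symmetric multiplicity
function recording the size of the connection (set of parallel edges) between
any two vertices; there are no loops. -/
structure MG : Type 1 where
  V : Type
  fin : Fintype V
  mult : V → V → ℕ
  symm : ∀ u v, mult u v = mult v u
  loopless : ∀ v, mult v v = 0

namespace MG

/-- Two vertices are adjacent when their connection is non-empty. -/
def Adj (G : MG) (u v : G.V) : Prop := 0 < G.mult u v

/-- Connection size as a function on unordered pairs of vertices. -/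
def multS (G : MG) : Sym2 G.V → ℕ := Sym2.lift ⟨G.mult, G.symm⟩

/-- Number of vertices. -/
def order (G : MG) : ℕ := @Fintype.card G.V G.fin

/-- Degree of a vertex, counting edges with multiplicity. -/
def deg (G : MG) (v : G.V) : ℕ :=
  haveI := G.fin
  ∑ u, G.mult v u

/-- `G` is `k`-regular. -/
def Regular (G : MG) (k : ℕ) : Prop := ∀ v, G.deg v = k

/-- A simple graph: every connection has size at most 1. -/
def Simple (G : MG) : Prop := ∀ u v, G.mult u v ≤ 1

/-- Isomorphism of multigraphs. -/
def Iso (G H : MG) : Prop :=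
  ∃ e : G.V ≃ H.V, ∀ u v, H.mult (e u) (e v) = G.mult u v

/-- Indicator: is `{a,b}` one of the three pairs `{u,v}, {u,w}, {v,w}`? -/
def triCount {V : Type} (u v w a b : V) : ℕ :=
  if s(a, b) ∈ ({s(u, v), s(u, w), s(v, w)} : Set (Sym2 V)) then 1 else 0

lemma triCount_symm {V : Type} (u v w a b : V) :
    triCount u v w a b = triCount u v w b a := by
  unfold triCount
  have h : s(a, b) = s(b, a) := Sym2.eq_swap
  rw [h]

/-- `u, v, w` form a delta (triangle): pairwise distinct and pairwise adjacent. -/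
def IsDelta (G : MG) (u v w : G.V) : Prop :=
  u ≠ v ∧ u ≠ w ∧ v ≠ w ∧ G.Adj u v ∧ G.Adj u w ∧ G.Adj v w

/-- `x` is the centre of a wye with external vertices `u, v, w`: the edges
incident to `x` are exactly two parallel edges to each of `u, v, w`. -/
def IsWye (G : MG) (x u v w : G.V) : Prop :=
  u ≠ v ∧ u ≠ w ∧ v ≠ w ∧ x ≠ u ∧ x ≠ v ∧ x ≠ w ∧
    G.mult x u = 2 ∧ G.mult x v = 2 ∧ G.mult x w = 2 ∧
    ∀ y : G.V, y ≠ u → y ≠ v → y ≠ w → G.mult x y = 0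

/-- Multiplicity function of the result of a Δ-YY transformation on the
delta `u, v, w`; the new vertex `x` is `none`. -/
def deltaMult (G : MG) (u v w : G.V) : Option G.V → Option G.V → ℕ
  | none, none => 0
  | none, some b => if b = u ∨ b = v ∨ b = w then 2 else 0
  | some a, none => if a = u ∨ a = v ∨ a = w then 2 else 0
  | some a, some b => G.mult a b - triCount u v w a b

/-- The result of the Δ-YY transformation on the delta `u, v, w`: one edge of
each of the connections `uv`, `uw`, `vw` is removed, a new vertex (`none`) is
added, joined by two parallel edges to each of `u, v, w`. -/
def deltaYY (G : MG) (u v w : G.V) : MG where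
  V := Option G.V
  fin := by haveI := G.fin; infer_instance
  mult := G.deltaMult u v w
  symm := by
    rintro (_ | a) (_ | b)
    · rfl
    · rfl
    · rfl
    · show G.mult a b - triCount u v w a b = G.mult b a - triCount u v w b a
      rw [G.symm a b, triCount_symm]
  loopless := by
    rintro (_ | a)
    · rfl
    · show G.mult a a - triCount u v w a a = 0
      rw [G.loopless]
      exact Nat.zero_sub _

/-- The result of the YY-Δ transformation on a wye with centre `x` and external
vertices `u, v, w`: the vertex `x` is deleted together with all its incident
edges, and one new edge is added to each of the connections `uv`, `uw`, `vw`. -/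
def yyDelta (G : MG) (x u v w : G.V) : MG where
  V := {y : G.V // y ≠ x}
  fin := by haveI := G.fin; infer_instance
  mult a b := if a = b then 0 else G.mult a.1 b.1 + triCount u v w a.1 b.1
  symm := by
    intro a b
    try dsimp only
    rcases eq_or_ne a b with h | h
    · subst h; rfl
    · rw [if_neg h, if_neg h.symm, G.symm a.1 b.1, triCount_symm]
  loopless := fun a => if_pos rfl

/-- `G'` is obtained from `G` by a Δ-YY transformation. -/
def DeltaYYStep (G G' : MG) : Prop :=
  ∃ u v w : G.V, G.IsDelta u v w ∧ Iso (G.deltaYY u v w) G'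

/-- `G'` is obtained from `G` by a YY-Δ transformation. -/
def YYDeltaStep (G G' : MG) : Prop :=
  ∃ x u v w : G.V, G.IsWye x u v w ∧ Iso (G.yyDelta x u v w) G'

/-- `G'` is obtained from `G` by a Δ-YY operation (either a Δ-YY transformation
or a YY-Δ transformation). -/
def Step (G G' : MG) : Prop := DeltaYYStep G G' ∨ YYDeltaStep G G'

/-- Δ-YY equivalence: `G` can be transformed into `H`, up to isomorphism, by a
finite sequence of Δ-YY operations. -/
def DYYEquiv : MG → MG → Prop :=
  Relation.EqvGen (fun G G' => Step G G' ∨ Iso G G')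

/-- The Δ-YY equivalence class of `G` contains only finitely many isomorphism
classes of multigraphs. -/
def FiniteClass (G : MG) : Prop :=
  ∃ S : Finset MG, ∀ H : MG, DYYEquiv G H → ∃ H' ∈ S, Iso H H'

/-- Connectivity: nonempty, and any two vertices are joined by a path. -/
def Connected (G : MG) : Prop :=
  Nonempty G.V ∧ ∀ u v : G.V, Relation.ReflTransGen G.Adj u v

/-- The multigraph obtained by deleting a set of vertices (and all edges
incident to them). -/
def deleteVerts (G : MG) (S : Set G.V) : MG where
  V := {y : G.V // y ∉ S}
  fin := by haveI := G.fin; infer_instance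
  mult a b := G.mult a.1 b.1
  symm := fun a b => G.symm a.1 b.1
  loopless := fun a => G.loopless a.1

/-- `G` is `k`-connected: it has more than `k` vertices and deleting any set of
fewer than `k` vertices leaves a connected multigraph. -/
def KConnected (G : MG) (k : ℕ) : Prop :=
  k < G.order ∧ ∀ S : Set G.V, S.ncard < k → (G.deleteVerts S).Connected

/-- `G` is planar: it has a drawing in the plane in which vertices are distinct
points, every edge (each parallel edge separately) is a continuous injective
arc joining the points of its endpoints, no arc passes through a vertex point
in its interior, and the interiors of the arcs of distinct edges are disjoint.
The arc of the `k`-th edge from `v` to `u` is the reverse of the arc of the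
`k`-th edge from `u` to `v` (they are the same edge drawn once). -/
def IsPlanar (G : MG) : Prop :=
  ∃ (pos : G.V → ℝ × ℝ) (γ : G.V → G.V → ℕ → C(unitInterval, ℝ × ℝ)),
    Function.Injective pos ∧
    (∀ u v k, k < G.mult u v →
      γ u v k 0 = pos u ∧ γ u v k 1 = pos v ∧ Function.Injective (γ u v k)) ∧
    (∀ u v k (t : unitInterval), γ v u k t = γ u v k (unitInterval.symm t)) ∧
    (∀ u v k, k < G.mult u v → ∀ t : unitInterval, t ≠ 0 → t ≠ 1 →
      ∀ z : G.V, γ u v k t ≠ pos z) ∧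
    (∀ u v k u' v' k', k < G.mult u v → k' < G.mult u' v' →
      (s(u, v) ≠ s(u', v') ∨ k ≠ k') →
      ∀ t t' : unitInterval, t ≠ 0 → t ≠ 1 → t' ≠ 0 → t' ≠ 1 →
        γ u v k t ≠ γ u' v' k' t')

/-- An independent set: no two of its vertices are adjacent. -/
def IsIndepSet (G : MG) (S : Set G.V) : Prop :=
  ∀ u ∈ S, ∀ v ∈ S, ¬ G.Adj u v

/-- The independence number `α(G)`: the maximum size of an independent set. -/
def indepNum (G : MG) : ℕ :=
  sSup {n | ∃ S : Set G.V, G.IsIndepSet S ∧ S.ncard = n}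

/-- The number of non-empty connections, i.e. the number of edges of the
simplification `G^S`. -/
def numConn (G : MG) : ℕ := {p : Sym2 G.V | G.multS p ≠ 0}.ncard

/-- The cyclomatic number `m - n + 1` of the simplification `G^S` of `G`. -/
def cyclomaticS (G : MG) : ℤ := (G.numConn : ℤ) - (G.order : ℤ) + 1

/-- `AddOnAt G a S` : the vertex set `S` of `G` carries (a subgraph copy of) an
add-on whose addition vertex is `a`.  An add-on of length 0 is a double edge or
a delta; an add-on of length `n ≥ 1` is a 4-cycle `a b c d` with the
connections `ab`, `ad` of size 1 and `bc`, `cd` of size 2, glued at `c` to an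
add-on of length `n - 1`. -/
inductive AddOnAt (G : MG) : G.V → Set G.V → Prop
  | double (a b : G.V) : a ≠ b → 2 ≤ G.mult a b → AddOnAt G a {a, b}
  | delta (a b c : G.V) : a ≠ b → a ≠ c → b ≠ c →
      1 ≤ G.mult a b → 1 ≤ G.mult a c → 1 ≤ G.mult b c → AddOnAt G a {a, b, c}
  | link (a b c d : G.V) (S : Set G.V) :
      a ≠ b → a ≠ c → a ≠ d → b ≠ c → b ≠ d → c ≠ d →
      1 ≤ G.mult a b → 1 ≤ G.mult a d → 2 ≤ G.mult b c → 2 ≤ G.mult c d →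
      AddOnAt G c S → S ∩ {a, b, d} = ∅ → AddOnAt G a ({a, b, d} ∪ S)

/-- `G` contains one of the four families of excluded subgraphs. -/
def HasExcluded (G : MG) : Prop :=
  -- (1) a 3-cycle in which at least one connection has size at least 2
  (∃ a b c : G.V, a ≠ b ∧ a ≠ c ∧ b ≠ c ∧
      2 ≤ G.mult a b ∧ 1 ≤ G.mult a c ∧ 1 ≤ G.mult b c) ∨
  -- (2) a 4-cycle with at least three connections of size at least 2 and an
  -- add-on glued at a vertex incident to two of them
  (∃ a b c d : G.V, ∃ S : Set G.V,
      a ≠ b ∧ a ≠ c ∧ a ≠ d ∧ b ≠ c ∧ b ≠ d ∧ c ≠ d ∧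
      2 ≤ G.mult a b ∧ 2 ≤ G.mult b c ∧ 2 ≤ G.mult c d ∧ 1 ≤ G.mult d a ∧
      AddOnAt G b S ∧ S ∩ {a, c, d} = ∅) ∨
  -- (3) a 5-cycle with all connections of size at least 2 and add-ons glued at
  -- two non-adjacent vertices of the cycle
  (∃ v₀ v₁ v₂ v₃ v₄ : G.V, ∃ S T : Set G.V,
      v₀ ≠ v₁ ∧ v₀ ≠ v₂ ∧ v₀ ≠ v₃ ∧ v₀ ≠ v₄ ∧ v₁ ≠ v₂ ∧ v₁ ≠ v₃ ∧ v₁ ≠ v₄ ∧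
      v₂ ≠ v₃ ∧ v₂ ≠ v₄ ∧ v₃ ≠ v₄ ∧
      2 ≤ G.mult v₀ v₁ ∧ 2 ≤ G.mult v₁ v₂ ∧ 2 ≤ G.mult v₂ v₃ ∧
      2 ≤ G.mult v₃ v₄ ∧ 2 ≤ G.mult v₄ v₀ ∧
      AddOnAt G v₀ S ∧ AddOnAt G v₂ T ∧
      S ∩ {v₁, v₂, v₃, v₄} = ∅ ∧ T ∩ {v₀, v₁, v₃, v₄} = ∅ ∧ S ∩ T = ∅) ∨
  -- (4) a 4-cycle with three connections of size at least 2, whose fourth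
  -- connection has size 1 and lies in a triangle, with add-ons glued at both
  -- vertices of that connection
  (∃ a b c d e : G.V, ∃ S T : Set G.V,
      a ≠ b ∧ a ≠ c ∧ a ≠ d ∧ a ≠ e ∧ b ≠ c ∧ b ≠ d ∧ b ≠ e ∧
      c ≠ d ∧ c ≠ e ∧ d ≠ e ∧
      2 ≤ G.mult a b ∧ 2 ≤ G.mult b c ∧ 2 ≤ G.mult c d ∧ G.mult d a = 1 ∧
      1 ≤ G.mult d e ∧ 1 ≤ G.mult e a ∧
      AddOnAt G a S ∧ AddOnAt G d T ∧
      S ∩ {b, c, d, e} = ∅ ∧ T ∩ {a, b, c, e} = ∅ ∧ S ∩ T = ∅)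

/-- The doubling of a simple graph: every edge is replaced by a connection of
size 2. -/
def doubling {V : Type} [Fintype V] (H : SimpleGraph V) : MG where
  V := V
  fin := inferInstance
  mult u v := if H.Adj u v then 2 else 0
  symm := by
    intro u v
    try dsimp only
    by_cases h : H.Adj u v
    · rw [if_pos h, if_pos h.symm]
    · rw [if_neg h, if_neg fun h' => h h'.symm]
  loopless := fun v => if_neg (H.loopless.irrefl v)

end MG

end

namespace MG

section TriCountHelpers

variable {V : Type}

lemma triCount_le_one (u v w a b : V) : triCount u v w a b ≤ 1 := by
  unfold triCount; split <;> omega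

lemma triCount_eq_one {u v w a b : V}
    (h : s(a, b) = s(u, v) ∨ s(a, b) = s(u, w) ∨ s(a, b) = s(v, w)) :
    triCount u v w a b = 1 := by
  unfold triCount
  rw [if_pos]
  simpa [Set.mem_insert_iff, Set.mem_singleton_iff] using h

lemma triCount_eq_zero {u v w a b : V}
    (h : ¬(s(a, b) = s(u, v) ∨ s(a, b) = s(u, w) ∨ s(a, b) = s(v, w))) :
    triCount u v w a b = 0 := by
  unfold triCount
  rw [if_neg]
  simpa [Set.mem_insert_iff, Set.mem_singleton_iff] using h

lemma triCount_zero_left {u v w a b : V} (h1 : a ≠ u) (h2 : a ≠ v) (h3 : a ≠ w) :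
    triCount u v w a b = 0 := by
  apply triCount_eq_zero
  rintro (h | h | h) <;> rw [Sym2.eq_iff] at h <;> tauto

lemma triCount_zero_right {u v w a b : V} (h1 : b ≠ u) (h2 : b ≠ v) (h3 : b ≠ w) :
    triCount u v w a b = 0 := by
  rw [triCount_symm]; exact triCount_zero_left h1 h2 h3

lemma triCount_NN {u v w a b : V} (ha : a = u ∨ a = v ∨ a = w)
    (hb : b = u ∨ b = v ∨ b = w) (hab : a ≠ b) :
    triCount u v w a b = 1 := by
  apply triCount_eq_one
  rcases ha with rfl | rfl | rfl <;> rcases hb with rfl | rfl | rfl <;>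
    first
      | exact absurd rfl hab
      | simp [Sym2.eq_iff]

lemma triCount_not_NN {u v w a b : V}
    (h : ¬((a = u ∨ a = v ∨ a = w) ∧ (b = u ∨ b = v ∨ b = w))) :
    triCount u v w a b = 0 := by
  apply triCount_eq_zero
  rintro (hh | hh | hh) <;> rw [Sym2.eq_iff] at hh <;>
    rcases hh with ⟨rfl, rfl⟩ | ⟨rfl, rfl⟩ <;> tauto

end TriCountHelpers

end MG
namespace MG

/-- Forbidden pattern 1: a triangle containing a connection of size ≥ 2. -/
def Bad1 (G : MG) : Prop :=
  ∃ a b c : G.V, a ≠ b ∧ a ≠ c ∧ b ≠ c ∧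
    2 ≤ G.mult a b ∧ 1 ≤ G.mult b c ∧ 1 ≤ G.mult c a

/-- Forbidden pattern 2: a 4-cycle with three consecutive connections of size
≥ 2 and a fourth non-empty connection. -/
def Bad2 (G : MG) : Prop :=
  ∃ a b c d : G.V, a ≠ b ∧ a ≠ c ∧ a ≠ d ∧ b ≠ c ∧ b ≠ d ∧ c ≠ d ∧
    2 ≤ G.mult a b ∧ 2 ≤ G.mult b c ∧ 2 ≤ G.mult c d ∧ 1 ≤ G.mult d a

/-- Forbidden pattern 3: a 5-cycle all of whose connections have size ≥ 2. -/
def Bad3 (G : MG) : Prop :=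
  ∃ a b c d e : G.V, a ≠ b ∧ a ≠ c ∧ a ≠ d ∧ a ≠ e ∧ b ≠ c ∧ b ≠ d ∧ b ≠ e ∧
    c ≠ d ∧ c ≠ e ∧ d ≠ e ∧
    2 ≤ G.mult a b ∧ 2 ≤ G.mult b c ∧ 2 ≤ G.mult c d ∧ 2 ≤ G.mult d e ∧
    2 ≤ G.mult e a

/-- The invariant preserved by Δ-YY operations. -/
def Inv (G : MG) : Prop :=
  (∀ a b : G.V, G.mult a b ≤ 2) ∧ ¬ Bad1 G ∧ ¬ Bad2 G ∧ ¬ Bad3 G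

section MultUnfold

variable {G : MG} {u v w x : G.V}

lemma dYY_ss (a b : G.V) : (G.deltaYY u v w).mult (some a) (some b)
    = G.mult a b - triCount u v w a b := rfl

lemma dYY_ns (b : G.V) : (G.deltaYY u v w).mult none (some b)
    = if b = u ∨ b = v ∨ b = w then 2 else 0 := rfl

lemma dYY_sn (a : G.V) : (G.deltaYY u v w).mult (some a) none
    = if a = u ∨ a = v ∨ a = w then 2 else 0 := rfl

lemma dYY_nn : (G.deltaYY u v w).mult none none = 0 := rfl

lemma dYY_ns_pos {b : G.V} (h : 1 ≤ (G.deltaYY u v w).mult none (some b)) :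
    b = u ∨ b = v ∨ b = w := by
  rw [dYY_ns] at h; by_contra hc; rw [if_neg hc] at h; omega

lemma dYY_sn_pos {a : G.V} (h : 1 ≤ (G.deltaYY u v w).mult (some a) none) :
    a = u ∨ a = v ∨ a = w := by
  rw [dYY_sn] at h; by_contra hc; rw [if_neg hc] at h; omega

lemma dYY_ns_two {b : G.V} (h : b = u ∨ b = v ∨ b = w) :
    (G.deltaYY u v w).mult none (some b) = 2 := by rw [dYY_ns, if_pos h]

lemma dYY_sn_two {a : G.V} (h : a = u ∨ a = v ∨ a = w) :
    (G.deltaYY u v w).mult (some a) none = 2 := by rw [dYY_sn, if_pos h]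

lemma yD_mult (a b : {y : G.V // y ≠ x}) (hab : a ≠ b) :
    (G.yyDelta x u v w).mult a b
      = G.mult a.1 b.1 + triCount u v w a.1 b.1 := by
  show (if a = b then 0 else G.mult a.1 b.1 + triCount u v w a.1 b.1) = _
  rw [if_neg hab]

end MultUnfold

section IsoHelpers

lemma Iso.symmIso {G H : MG} (h : Iso G H) : Iso H G := by
  obtain ⟨e, he⟩ := h
  refine ⟨e.symm, fun p q => ?_⟩
  have := he (e.symm p) (e.symm q)
  rw [e.apply_symm_apply, e.apply_symm_apply] at this
  exact this.symm

lemma Inv.ofIso {G H : MG} (h : Iso G H) (hI : Inv G) : Inv H := by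
  obtain ⟨e, he⟩ := h
  obtain ⟨hm, h1, h2, h3⟩ := hI
  have key : ∀ p q : H.V, H.mult p q = G.mult (e.symm p) (e.symm q) := by
    intro p q
    have := he (e.symm p) (e.symm q)
    rwa [e.apply_symm_apply, e.apply_symm_apply] at this
  refine ⟨fun p q => by rw [key]; exact hm _ _, ?_, ?_, ?_⟩
  · rintro ⟨a, b, c, hab, hac, hbc, m1, m2, m3⟩
    exact h1 ⟨e.symm a, e.symm b, e.symm c,
      fun hh => hab (e.symm.injective hh), fun hh => hac (e.symm.injective hh),
      fun hh => hbc (e.symm.injective hh),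
      by rwa [key] at m1, by rwa [key] at m2, by rwa [key] at m3⟩
  · rintro ⟨a, b, c, d, hab, hac, had, hbc, hbd, hcd, m1, m2, m3, m4⟩
    exact h2 ⟨e.symm a, e.symm b, e.symm c, e.symm d,
      fun hh => hab (e.symm.injective hh), fun hh => hac (e.symm.injective hh),
      fun hh => had (e.symm.injective hh), fun hh => hbc (e.symm.injective hh),
      fun hh => hbd (e.symm.injective hh), fun hh => hcd (e.symm.injective hh),
      by rwa [key] at m1, by rwa [key] at m2, by rwa [key] at m3,
      by rwa [key] at m4⟩
  · rintro ⟨a, b, c, d, f, hab, hac, had, haf, hbc, hbd, hbf, hcd, hcf, hdf,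
      m1, m2, m3, m4, m5⟩
    exact h3 ⟨e.symm a, e.symm b, e.symm c, e.symm d, e.symm f,
      fun hh => hab (e.symm.injective hh), fun hh => hac (e.symm.injective hh),
      fun hh => had (e.symm.injective hh), fun hh => haf (e.symm.injective hh),
      fun hh => hbc (e.symm.injective hh), fun hh => hbd (e.symm.injective hh),
      fun hh => hbf (e.symm.injective hh), fun hh => hcd (e.symm.injective hh),
      fun hh => hcf (e.symm.injective hh), fun hh => hdf (e.symm.injective hh),
      by rwa [key] at m1, by rwa [key] at m2, by rwa [key] at m3,
      by rwa [key] at m4, by rwa [key] at m5⟩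

end IsoHelpers

end MG
namespace MG

section DeltaYY

variable {G : MG} {u v w : G.V}

private lemma some_ne {α : Type} {a b : α} (h : (some a : Option α) ≠ some b) :
    a ≠ b := fun hh => h (by rw [hh])

private lemma ne_some {α : Type} {a b : α} (h : a ≠ b) :
    (some a : Option α) ≠ some b := fun hh => h (Option.some.inj hh)

/-- In a graph with no Bad1 pattern, the connections of a delta have size 1. -/
lemma delta_pair_one (hd : G.IsDelta u v w) (hB1 : ¬ Bad1 G) :
    ∀ p q : G.V, (p = u ∨ p = v ∨ p = w) → (q = u ∨ q = v ∨ q = w) → p ≠ q →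
      G.mult p q = 1 := by
  obtain ⟨huv, huw, hvw, a1, a2, a3⟩ := hd
  have a1' : 1 ≤ G.mult u v := a1
  have a2' : 1 ≤ G.mult u w := a2
  have a3' : 1 ≤ G.mult v w := a3
  have s1 := G.symm u v
  have s2 := G.symm u w
  have s3 := G.symm v w
  have e1 : G.mult u v = 1 := by
    by_contra h
    exact hB1 ⟨u, v, w, huv, huw, hvw, by omega, by omega, by omega⟩
  have e2 : G.mult u w = 1 := by
    by_contra h
    exact hB1 ⟨u, w, v, huw, huv, Ne.symm hvw, by omega, by omega, by omega⟩
  have e3 : G.mult v w = 1 := by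
    by_contra h
    exact hB1 ⟨v, w, u, hvw, Ne.symm huv, Ne.symm huw, by omega, by omega,
      by omega⟩
  rintro p q (rfl | rfl | rfl) (rfl | rfl | rfl) hpq <;>
    first
      | exact absurd rfl hpq
      | omega

/-- Forward preservation: Δ-YY keeps the invariant. -/
lemma Inv.deltaYY (hd : G.IsDelta u v w) (hI : Inv G) :
    Inv (G.deltaYY u v w) := by
  obtain ⟨hm, hB1, hB2, hB3⟩ := hI
  have hp1 := delta_pair_one hd hB1
  refine ⟨?_, ?_, ?_, ?_⟩
  · -- mult ≤ 2
    rintro (_ | a) (_ | b)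
    · rw [dYY_nn]; omega
    · rw [dYY_ns]; split <;> omega
    · rw [dYY_sn]; split <;> omega
    · rw [dYY_ss]; have := hm a b; omega
  · -- ¬ Bad1
    rintro ⟨A, B, C, hAB, hAC, hBC, m1, m2, m3⟩
    rcases A with _ | a
    · rcases B with _ | b
      · exact hAB rfl
      rcases C with _ | c
      · exact hAC rfl
      have hb : b = u ∨ b = v ∨ b = w := dYY_ns_pos (by omega)
      have hc : c = u ∨ c = v ∨ c = w := dYY_sn_pos m3
      rw [dYY_ss] at m2
      have hbc : b ≠ c := some_ne hBC
      have h1 := hp1 b c hb hc hbc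
      have h2 := triCount_NN hb hc hbc (u := u)
      omega
    · rcases B with _ | b
      · rcases C with _ | c
        · exact hBC rfl
        have ha : a = u ∨ a = v ∨ a = w := dYY_sn_pos (by omega)
        have hc : c = u ∨ c = v ∨ c = w := dYY_ns_pos m2
        rw [dYY_ss] at m3
        have hca : c ≠ a := some_ne (Ne.symm hAC)
        have h1 := hp1 c a hc ha hca
        have h2 := triCount_NN hc ha hca (u := u)
        omega
      · rcases C with _ | c
        · have hb : b = u ∨ b = v ∨ b = w := dYY_sn_pos m2
          have ha : a = u ∨ a = v ∨ a = w := dYY_ns_pos m3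
          rw [dYY_ss] at m1
          have hab : a ≠ b := some_ne hAB
          have h1 := hp1 a b ha hb hab
          have h2 := triCount_NN ha hb hab (u := u)
          omega
        · rw [dYY_ss] at m1 m2 m3
          exact hB1 ⟨a, b, c, some_ne hAB, some_ne hAC, some_ne hBC,
            by omega, by omega, by omega⟩
  · -- ¬ Bad2
    rintro ⟨A, B, C, D, hAB, hAC, hAD, hBC, hBD, hCD, m1, m2, m3, m4⟩
    rcases A with _ | a
    · rcases B with _ | b
      · exact hAB rfl
      rcases C with _ | c
      · exact hAC rfl
      rcases D with _ | d
      · exact hAD rfl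
      have hb : b = u ∨ b = v ∨ b = w := dYY_ns_pos (by omega)
      have hd' : d = u ∨ d = v ∨ d = w := dYY_sn_pos m4
      rw [dYY_ss] at m2 m3
      have hbd : b ≠ d := some_ne hBD
      have h1 := hp1 d b hd' hb (Ne.symm hbd)
      exact hB1 ⟨c, d, b, some_ne hCD, Ne.symm (some_ne hBC), Ne.symm hbd,
        by omega, by omega, by omega⟩
    · rcases B with _ | b
      · rcases C with _ | c
        · exact hBC rfl
        rcases D with _ | d
        · exact hBD rfl
        have ha : a = u ∨ a = v ∨ a = w := dYY_sn_pos (by omega)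
        have hc : c = u ∨ c = v ∨ c = w := dYY_ns_pos (by omega)
        rw [dYY_ss] at m3 m4
        have hac : a ≠ c := some_ne hAC
        have h1 := hp1 a c ha hc hac
        exact hB1 ⟨c, d, a, some_ne hCD, Ne.symm hac, Ne.symm (some_ne hAD),
          by omega, by omega, by omega⟩
      · rcases C with _ | c
        · rcases D with _ | d
          · exact hCD rfl
          have hb : b = u ∨ b = v ∨ b = w := dYY_sn_pos (by omega)
          have hd' : d = u ∨ d = v ∨ d = w := dYY_ns_pos (by omega)
          rw [dYY_ss] at m1 m4
          have hbd : b ≠ d := some_ne hBD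
          have h1 := hp1 b d hb hd' hbd
          exact hB1 ⟨a, b, d, some_ne hAB, some_ne hAD, hbd,
            by omega, by omega, by omega⟩
        · rcases D with _ | d
          · have hc : c = u ∨ c = v ∨ c = w := dYY_sn_pos (by omega)
            have ha : a = u ∨ a = v ∨ a = w := dYY_ns_pos m4
            rw [dYY_ss] at m1 m2
            have hca : c ≠ a := Ne.symm (some_ne hAC)
            have h1 := hp1 c a hc ha hca
            exact hB1 ⟨a, b, c, some_ne hAB, some_ne hAC, some_ne hBC,
              by omega, by omega, by omega⟩
          · rw [dYY_ss] at m1 m2 m3 m4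
            exact hB2 ⟨a, b, c, d, some_ne hAB, some_ne hAC, some_ne hAD,
              some_ne hBC, some_ne hBD, some_ne hCD,
              by omega, by omega, by omega, by omega⟩
  · -- ¬ Bad3
    rintro ⟨A, B, C, D, E, hAB, hAC, hAD, hAE, hBC, hBD, hBE, hCD, hCE, hDE,
      m1, m2, m3, m4, m5⟩
    have core : ∀ p q r s : G.V, (p = u ∨ p = v ∨ p = w) →
        (s = u ∨ s = v ∨ s = w) → p ≠ q → p ≠ r → p ≠ s → q ≠ r → q ≠ s →
        r ≠ s → 2 ≤ G.mult p q → 2 ≤ G.mult q r → 2 ≤ G.mult r s → False := by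
      intro p q r s hp hs hpq hpr hps hqr hqs hrs h1 h2 h3
      have := hp1 s p hs hp (Ne.symm hps)
      exact hB2 ⟨p, q, r, s, hpq, hpr, hps, hqr, hqs, hrs, h1, h2, h3, by omega⟩
    rcases A with _ | a
    · rcases B with _ | b
      · exact hAB rfl
      rcases C with _ | c
      · exact hAC rfl
      rcases D with _ | d
      · exact hAD rfl
      rcases E with _ | e
      · exact hAE rfl
      have hb : b = u ∨ b = v ∨ b = w := dYY_ns_pos (by omega)
      have he : e = u ∨ e = v ∨ e = w := dYY_sn_pos (by omega)
      rw [dYY_ss] at m2 m3 m4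
      exact core b c d e hb he (some_ne hBC) (some_ne hBD) (some_ne hBE)
        (some_ne hCD) (some_ne hCE) (some_ne hDE)
        (by omega) (by omega) (by omega)
    · rcases B with _ | b
      · rcases C with _ | c
        · exact hBC rfl
        rcases D with _ | d
        · exact hBD rfl
        rcases E with _ | e
        · exact hBE rfl
        have hc : c = u ∨ c = v ∨ c = w := dYY_ns_pos (by omega)
        have ha : a = u ∨ a = v ∨ a = w := dYY_sn_pos (by omega)
        rw [dYY_ss] at m3 m4 m5
        exact core c d e a hc ha (some_ne hCD) (some_ne hCE)
          (Ne.symm (some_ne hAC)) (some_ne hDE) (Ne.symm (some_ne hAD))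
          (Ne.symm (some_ne hAE)) (by omega) (by omega) (by omega)
      · rcases C with _ | c
        · rcases D with _ | d
          · exact hCD rfl
          rcases E with _ | e
          · exact hCE rfl
          have hd' : d = u ∨ d = v ∨ d = w := dYY_ns_pos (by omega)
          have hb : b = u ∨ b = v ∨ b = w := dYY_sn_pos (by omega)
          rw [dYY_ss] at m1 m4 m5
          exact core d e a b hd' hb (some_ne hDE) (Ne.symm (some_ne hAD))
            (Ne.symm (some_ne hBD)) (Ne.symm (some_ne hAE))
            (Ne.symm (some_ne hBE)) (some_ne hAB)
            (by omega) (by omega) (by omega)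
        · rcases D with _ | d
          · rcases E with _ | e
            · exact hDE rfl
            have he : e = u ∨ e = v ∨ e = w := dYY_ns_pos (by omega)
            have hc : c = u ∨ c = v ∨ c = w := dYY_sn_pos (by omega)
            rw [dYY_ss] at m1 m2 m5
            exact core e a b c he hc (Ne.symm (some_ne hAE))
              (Ne.symm (some_ne hBE)) (Ne.symm (some_ne hCE)) (some_ne hAB)
              (some_ne hAC) (some_ne hBC) (by omega) (by omega) (by omega)
          · rcases E with _ | e
            · have ha : a = u ∨ a = v ∨ a = w := dYY_ns_pos (by omega)
              have hd' : d = u ∨ d = v ∨ d = w := dYY_sn_pos (by omega)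
              rw [dYY_ss] at m1 m2 m3
              exact core a b c d ha hd' (some_ne hAB) (some_ne hAC)
                (some_ne hAD) (some_ne hBC) (some_ne hBD) (some_ne hCD)
                (by omega) (by omega) (by omega)
            · rw [dYY_ss] at m1 m2 m3 m4 m5
              exact hB3 ⟨a, b, c, d, e, some_ne hAB, some_ne hAC, some_ne hAD,
                some_ne hAE, some_ne hBC, some_ne hBD, some_ne hBE,
                some_ne hCD, some_ne hCE, some_ne hDE,
                by omega, by omega, by omega, by omega, by omega⟩

end DeltaYY

end MG
namespace MG

section YYDelta

variable {G : MG} {x u v w : G.V}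

private lemma mk_ne {p q : G.V} (h : p ≠ q) {hp : p ≠ x} {hq : q ≠ x} :
    (⟨p, hp⟩ : {y : G.V // y ≠ x}) ≠ ⟨q, hq⟩ :=
  fun hh => h (congrArg Subtype.val hh)

private lemma sub_ne {a b : {y : G.V // y ≠ x}} (h : a ≠ b) : a.1 ≠ b.1 :=
  fun hh => h (Subtype.ext hh)

lemma wye_mem (hw : G.IsWye x u v w) {y : G.V} (h : 1 ≤ G.mult x y) :
    y = u ∨ y = v ∨ y = w := by
  obtain ⟨-, -, -, -, -, -, -, -, -, hx0⟩ := hw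
  by_contra hc
  push_neg at hc
  rw [hx0 y hc.1 hc.2.1 hc.2.2] at h
  omega

lemma wye_two (hw : G.IsWye x u v w) {y : G.V} (h : y = u ∨ y = v ∨ y = w) :
    G.mult x y = 2 := by
  obtain ⟨-, -, -, -, -, -, h1, h2, h3, -⟩ := hw
  rcases h with rfl | rfl | rfl <;> assumption

lemma wye_neN (hw : G.IsWye x u v w) {y : G.V}
    (h : y = u ∨ y = v ∨ y = w) : y ≠ x := by
  obtain ⟨-, -, -, h1, h2, h3, -, -, -, -⟩ := hw
  rcases h with rfl | rfl | rfl
  exacts [Ne.symm h1, Ne.symm h2, Ne.symm h3]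

lemma wye_third (hw : G.IsWye x u v w) {p q : G.V}
    (hp : p = u ∨ p = v ∨ p = w) (hq : q = u ∨ q = v ∨ q = w) (hpq : p ≠ q) :
    ∃ t, (t = u ∨ t = v ∨ t = w) ∧ t ≠ p ∧ t ≠ q := by
  obtain ⟨huv, huw, hvw, -, -, -, -, -, -, -⟩ := hw
  rcases hp with rfl | rfl | rfl <;> rcases hq with rfl | rfl | rfl <;>
    first
      | exact absurd rfl hpq
      | exact ⟨w, Or.inr (Or.inr rfl), Ne.symm huw, Ne.symm hvw⟩
      | exact ⟨v, Or.inr (Or.inl rfl), Ne.symm huv, hvw⟩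
      | exact ⟨u, Or.inl rfl, huv, huw⟩
      | exact ⟨v, Or.inr (Or.inl rfl), hvw, Ne.symm huv⟩
      | exact ⟨w, Or.inr (Or.inr rfl), Ne.symm hvw, Ne.symm huw⟩
      | exact ⟨u, Or.inl rfl, huw, huv⟩

/-- In a graph with no Bad1, the externals of a wye are pairwise non-adjacent. -/
lemma wye_pair_zero (hw : G.IsWye x u v w) (hB1 : ¬ Bad1 G) :
    ∀ p q : G.V, (p = u ∨ p = v ∨ p = w) → (q = u ∨ q = v ∨ q = w) → p ≠ q →
      G.mult p q = 0 := by
  obtain ⟨huv, huw, hvw, hxu, hxv, hxw, mxu, mxv, mxw, hx0⟩ := hw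
  have sxu := G.symm x u
  have sxv := G.symm x v
  have sxw := G.symm x w
  have e1 : G.mult u v = 0 := by
    by_contra h
    exact hB1 ⟨x, u, v, hxu, hxv, huv, by omega, by omega, by omega⟩
  have e2 : G.mult u w = 0 := by
    by_contra h
    exact hB1 ⟨x, u, w, hxu, hxw, huw, by omega, by omega, by omega⟩
  have e3 : G.mult v w = 0 := by
    by_contra h
    exact hB1 ⟨x, v, w, hxv, hxw, hvw, by omega, by omega, by omega⟩
  have s1 := G.symm u v
  have s2 := G.symm u w
  have s3 := G.symm v w
  rintro p q (rfl | rfl | rfl) (rfl | rfl | rfl) hpq <;>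
    first
      | exact absurd rfl hpq
      | omega

/-- Forward preservation: YY-Δ keeps the invariant. -/
lemma Inv.yyDelta (hw : G.IsWye x u v w) (hI : Inv G) :
    Inv (G.yyDelta x u v w) := by
  obtain ⟨hm, hB1, hB2, hB3⟩ := hI
  have hN0 := wye_pair_zero hw hB1
  refine ⟨?_, ?_, ?_, ?_⟩
  · -- mult ≤ 2
    intro a b
    by_cases hab : a = b
    · subst hab; rw [(G.yyDelta x u v w).loopless a]; omega
    · rw [yD_mult a b hab]
      by_cases hp : (a.1 = u ∨ a.1 = v ∨ a.1 = w) ∧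
          (b.1 = u ∨ b.1 = v ∨ b.1 = w)
      · have h0 := hN0 a.1 b.1 hp.1 hp.2 (sub_ne hab)
        have h1 := triCount_le_one u v w a.1 b.1
        omega
      · have h0 := triCount_not_NN (u := u) (v := v) (w := w) hp
        have h1 := hm a.1 b.1
        omega
  · -- ¬ Bad1
    rintro ⟨a, b, c, d1, d2, d3, m1, m2, m3⟩
    rw [yD_mult a b d1] at m1
    rw [yD_mult b c d3] at m2
    rw [yD_mult c a (Ne.symm d2)] at m3
    have n1 := sub_ne d1
    have n2 := sub_ne d2
    have n3 := sub_ne d3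
    by_cases pab : (a.1 = u ∨ a.1 = v ∨ a.1 = w) ∧
        (b.1 = u ∨ b.1 = v ∨ b.1 = w)
    · have h0 := hN0 a.1 b.1 pab.1 pab.2 n1
      have h1 := triCount_le_one u v w a.1 b.1
      omega
    · have tab := triCount_not_NN (u := u) (v := v) (w := w) pab
      by_cases pbc : (b.1 = u ∨ b.1 = v ∨ b.1 = w) ∧
          (c.1 = u ∨ c.1 = v ∨ c.1 = w)
      · have hna : ¬(a.1 = u ∨ a.1 = v ∨ a.1 = w) := fun h => pab ⟨h, pbc.1⟩
        have tca : triCount u v w c.1 a.1 = 0 :=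
          triCount_not_NN (fun hh => hna hh.2)
        have w1 := wye_two hw pbc.1
        have w2 := wye_two hw pbc.2
        have sb := G.symm x b.1
        exact hB2 ⟨a.1, b.1, x, c.1, n1, a.2, n2, b.2, n3, Ne.symm c.2,
          by omega, by omega, by omega, by omega⟩
      · have tbc := triCount_not_NN (u := u) (v := v) (w := w) pbc
        by_cases pca : (c.1 = u ∨ c.1 = v ∨ c.1 = w) ∧
            (a.1 = u ∨ a.1 = v ∨ a.1 = w)
        · have w1 := wye_two hw pca.2
          have w2 := wye_two hw pca.1
          have sa := G.symm x a.1
          have sab := G.symm a.1 b.1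
          have sbc := G.symm b.1 c.1
          exact hB2 ⟨b.1, a.1, x, c.1, Ne.symm n1, b.2, n3, a.2, n2,
            Ne.symm c.2, by omega, by omega, by omega, by omega⟩
        · have tca := triCount_not_NN (u := u) (v := v) (w := w) pca
          exact hB1 ⟨a.1, b.1, c.1, n1, n2, n3, by omega, by omega, by omega⟩
  · -- ¬ Bad2
    rintro ⟨a, b, c, d, d1, d2, d3, d4, d5, d6, m1, m2, m3, m4⟩
    rw [yD_mult a b d1] at m1
    rw [yD_mult b c d4] at m2
    rw [yD_mult c d d6] at m3
    rw [yD_mult d a (Ne.symm d3)] at m4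
    have n1 := sub_ne d1
    have n2 := sub_ne d2
    have n3 := sub_ne d3
    have n4 := sub_ne d4
    have n5 := sub_ne d5
    have n6 := sub_ne d6
    have nab : ¬((a.1 = u ∨ a.1 = v ∨ a.1 = w) ∧
        (b.1 = u ∨ b.1 = v ∨ b.1 = w)) := by
      intro hh
      have h0 := hN0 a.1 b.1 hh.1 hh.2 n1
      have h1 := triCount_NN hh.1 hh.2 n1
      omega
    have nbc : ¬((b.1 = u ∨ b.1 = v ∨ b.1 = w) ∧
        (c.1 = u ∨ c.1 = v ∨ c.1 = w)) := by
      intro hh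
      have h0 := hN0 b.1 c.1 hh.1 hh.2 n4
      have h1 := triCount_NN hh.1 hh.2 n4
      omega
    have ncd : ¬((c.1 = u ∨ c.1 = v ∨ c.1 = w) ∧
        (d.1 = u ∨ d.1 = v ∨ d.1 = w)) := by
      intro hh
      have h0 := hN0 c.1 d.1 hh.1 hh.2 n6
      have h1 := triCount_NN hh.1 hh.2 n6
      omega
    have tab := triCount_not_NN (u := u) (v := v) (w := w) nab
    have tbc := triCount_not_NN (u := u) (v := v) (w := w) nbc
    have tcd := triCount_not_NN (u := u) (v := v) (w := w) ncd
    by_cases pda : (d.1 = u ∨ d.1 = v ∨ d.1 = w) ∧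
        (a.1 = u ∨ a.1 = v ∨ a.1 = w)
    · have w1 := wye_two hw pda.2
      have w2 := wye_two hw pda.1
      have sd := G.symm x d.1
      exact hB3 ⟨x, a.1, b.1, c.1, d.1,
        Ne.symm a.2, Ne.symm b.2, Ne.symm c.2, Ne.symm d.2,
        n1, n2, n3, n4, n5, n6,
        by omega, by omega, by omega, by omega, by omega⟩
    · have tda := triCount_not_NN (u := u) (v := v) (w := w) pda
      exact hB2 ⟨a.1, b.1, c.1, d.1, n1, n2, n3, n4, n5, n6,
        by omega, by omega, by omega, by omega⟩
  · -- ¬ Bad3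
    rintro ⟨a, b, c, d, e, d1, d2, d3, d4, d5, d6, d7, d8, d9, d10,
      m1, m2, m3, m4, m5⟩
    rw [yD_mult a b d1] at m1
    rw [yD_mult b c d5] at m2
    rw [yD_mult c d d8] at m3
    rw [yD_mult d e d10] at m4
    rw [yD_mult e a (Ne.symm d4)] at m5
    have n1 := sub_ne d1
    have n2 := sub_ne d2
    have n3 := sub_ne d3
    have n4 := sub_ne d4
    have n5 := sub_ne d5
    have n6 := sub_ne d6
    have n7 := sub_ne d7
    have n8 := sub_ne d8
    have n9 := sub_ne d9
    have n10 := sub_ne d10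
    have nab : ¬((a.1 = u ∨ a.1 = v ∨ a.1 = w) ∧
        (b.1 = u ∨ b.1 = v ∨ b.1 = w)) := by
      intro hh
      have h0 := hN0 a.1 b.1 hh.1 hh.2 n1
      have h1 := triCount_NN hh.1 hh.2 n1
      omega
    have nbc : ¬((b.1 = u ∨ b.1 = v ∨ b.1 = w) ∧
        (c.1 = u ∨ c.1 = v ∨ c.1 = w)) := by
      intro hh
      have h0 := hN0 b.1 c.1 hh.1 hh.2 n5
      have h1 := triCount_NN hh.1 hh.2 n5
      omega
    have ncd : ¬((c.1 = u ∨ c.1 = v ∨ c.1 = w) ∧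
        (d.1 = u ∨ d.1 = v ∨ d.1 = w)) := by
      intro hh
      have h0 := hN0 c.1 d.1 hh.1 hh.2 n8
      have h1 := triCount_NN hh.1 hh.2 n8
      omega
    have nde : ¬((d.1 = u ∨ d.1 = v ∨ d.1 = w) ∧
        (e.1 = u ∨ e.1 = v ∨ e.1 = w)) := by
      intro hh
      have h0 := hN0 d.1 e.1 hh.1 hh.2 n10
      have h1 := triCount_NN hh.1 hh.2 n10
      omega
    have nea : ¬((e.1 = u ∨ e.1 = v ∨ e.1 = w) ∧
        (a.1 = u ∨ a.1 = v ∨ a.1 = w)) := by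
      intro hh
      have h0 := hN0 e.1 a.1 hh.1 hh.2 (Ne.symm n4)
      have h1 := triCount_NN hh.1 hh.2 (Ne.symm n4)
      omega
    have tab := triCount_not_NN (u := u) (v := v) (w := w) nab
    have tbc := triCount_not_NN (u := u) (v := v) (w := w) nbc
    have tcd := triCount_not_NN (u := u) (v := v) (w := w) ncd
    have tde := triCount_not_NN (u := u) (v := v) (w := w) nde
    have tea := triCount_not_NN (u := u) (v := v) (w := w) nea
    exact hB3 ⟨a.1, b.1, c.1, d.1, e.1, n1, n2, n3, n4, n5, n6, n7, n8, n9,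
      n10, by omega, by omega, by omega, by omega, by omega⟩

end YYDelta

end MG
namespace MG

section YYDeltaBack

variable {G : MG} {x u v w : G.V}

private lemma mk_ne' {p q : G.V} (h : p ≠ q) {hp : p ≠ x} {hq : q ≠ x} :
    (⟨p, hp⟩ : {y : G.V // y ≠ x}) ≠ ⟨q, hq⟩ :=
  fun hh => h (congrArg Subtype.val hh)

/-- Backward preservation for YY-Δ. -/
lemma Inv.ofYyDelta (hw : G.IsWye x u v w)
    (hI : Inv (G.yyDelta x u v w)) : Inv G := by
  obtain ⟨hm', hB1', hB2', hB3'⟩ := hI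
  obtain ⟨huv, huw, hvw, hxu, hxv, hxw, mxu, mxv, mxw, hx0⟩ := id hw
  have hN1 : ∀ p q : G.V, (p = u ∨ p = v ∨ p = w) →
      (q = u ∨ q = v ∨ q = w) → p ≠ q → G.mult p q ≤ 1 := by
    intro p q hp hq hpq
    have h2 := hm' ⟨p, wye_neN hw hp⟩ ⟨q, wye_neN hw hq⟩
    rw [yD_mult _ _ (mk_ne' hpq)] at h2
    dsimp only at h2
    have := triCount_NN hp hq hpq
    omega
  refine ⟨?_, ?_, ?_, ?_⟩
  · -- mult ≤ 2
    intro a b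
    by_cases hax : a = x
    · obtain rfl : x = a := hax.symm
      by_cases hb : b = u ∨ b = v ∨ b = w
      · have := wye_two hw hb; omega
      · push_neg at hb
        have := hx0 b hb.1 hb.2.1 hb.2.2
        omega
    · by_cases hbx : b = x
      · obtain rfl : x = b := hbx.symm
        have s2 := G.symm x a
        by_cases ha : a = u ∨ a = v ∨ a = w
        · have := wye_two hw ha; omega
        · push_neg at ha
          have := hx0 a ha.1 ha.2.1 ha.2.2
          omega
      · by_cases hab : a = b
        · subst hab; rw [G.loopless]; omega
        · have h2 := hm' ⟨a, hax⟩ ⟨b, hbx⟩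
          rw [yD_mult _ _ (mk_ne' hab)] at h2
          dsimp only at h2
          omega
  · -- ¬ Bad1 G
    rintro ⟨a, b, c, d1, d2, d3, m1, m2, m3⟩
    by_cases hax : a = x
    · obtain rfl : x = a := hax.symm
      have hb : b = u ∨ b = v ∨ b = w := wye_mem hw (by omega)
      have hc : c = u ∨ c = v ∨ c = w :=
        wye_mem hw (by have := G.symm c x; omega)
      obtain ⟨t, ht, htb, htc⟩ := wye_third hw hb hc d3
      have t1 := triCount_NN hb hc d3
      have t2 := triCount_NN hc ht (Ne.symm htc)
      have t3 := triCount_NN ht hb htb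
      refine hB1' ⟨⟨b, wye_neN hw hb⟩, ⟨c, wye_neN hw hc⟩, ⟨t, wye_neN hw ht⟩,
        mk_ne' d3, mk_ne' (Ne.symm htb), mk_ne' (Ne.symm htc), ?_, ?_, ?_⟩
      · rw [yD_mult _ _ (mk_ne' d3)]; dsimp only; omega
      · rw [yD_mult _ _ (mk_ne' (Ne.symm htc))]; dsimp only; omega
      · rw [yD_mult _ _ (mk_ne' htb)]; dsimp only; omega
    · by_cases hbx : b = x
      · obtain rfl : x = b := hbx.symm
        have ha : a = u ∨ a = v ∨ a = w :=
          wye_mem hw (by have := G.symm a x; omega)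
        have hc : c = u ∨ c = v ∨ c = w := wye_mem hw (by omega)
        obtain ⟨t, ht, hta, htc⟩ := wye_third hw ha hc d2
        have t1 := triCount_NN ha hc d2
        have t2 := triCount_NN hc ht (Ne.symm htc)
        have t3 := triCount_NN ht ha hta
        have s := G.symm c a
        refine hB1' ⟨⟨a, hax⟩, ⟨c, wye_neN hw hc⟩, ⟨t, wye_neN hw ht⟩,
          mk_ne' d2, mk_ne' (Ne.symm hta), mk_ne' (Ne.symm htc), ?_, ?_, ?_⟩
        · rw [yD_mult _ _ (mk_ne' d2)]; dsimp only; omega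
        · rw [yD_mult _ _ (mk_ne' (Ne.symm htc))]; dsimp only; omega
        · rw [yD_mult _ _ (mk_ne' hta)]; dsimp only; omega
      · by_cases hcx : c = x
        · obtain rfl : x = c := hcx.symm
          have hb : b = u ∨ b = v ∨ b = w :=
            wye_mem hw (by have := G.symm b x; omega)
          have ha : a = u ∨ a = v ∨ a = w := wye_mem hw (by omega)
          have := hN1 a b ha hb d1
          omega
        · refine hB1' ⟨⟨a, hax⟩, ⟨b, hbx⟩, ⟨c, hcx⟩,
            mk_ne' d1, mk_ne' d2, mk_ne' d3, ?_, ?_, ?_⟩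
          · rw [yD_mult _ _ (mk_ne' d1)]; dsimp only; omega
          · rw [yD_mult _ _ (mk_ne' d3)]; dsimp only; omega
          · rw [yD_mult _ _ (mk_ne' (Ne.symm d2))]; dsimp only; omega
  · -- ¬ Bad2 G
    rintro ⟨a, b, c, d, d1, d2, d3, d4, d5, d6, m1, m2, m3, m4⟩
    by_cases hax : a = x
    · obtain rfl : x = a := hax.symm
      have hb : b = u ∨ b = v ∨ b = w := wye_mem hw (by omega)
      have hd : d = u ∨ d = v ∨ d = w :=
        wye_mem hw (by have := G.symm d x; omega)
      have t1 := triCount_NN hd hb (Ne.symm d5)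
      refine hB1' ⟨⟨b, wye_neN hw hb⟩, ⟨c, Ne.symm d2⟩, ⟨d, wye_neN hw hd⟩,
        mk_ne' d4, mk_ne' d5, mk_ne' d6, ?_, ?_, ?_⟩
      · rw [yD_mult _ _ (mk_ne' d4)]; dsimp only; omega
      · rw [yD_mult _ _ (mk_ne' d6)]; dsimp only; omega
      · rw [yD_mult _ _ (mk_ne' (Ne.symm d5))]; dsimp only; omega
    · by_cases hbx : b = x
      · obtain rfl : x = b := hbx.symm
        have ha : a = u ∨ a = v ∨ a = w :=
          wye_mem hw (by have := G.symm a x; omega)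
        have hc : c = u ∨ c = v ∨ c = w := wye_mem hw (by omega)
        have t1 := triCount_NN ha hc d2
        refine hB1' ⟨⟨c, Ne.symm d4⟩, ⟨d, Ne.symm d5⟩, ⟨a, hax⟩,
          mk_ne' d6, mk_ne' (Ne.symm d2), mk_ne' (Ne.symm d3), ?_, ?_, ?_⟩
        · rw [yD_mult _ _ (mk_ne' d6)]; dsimp only; omega
        · rw [yD_mult _ _ (mk_ne' (Ne.symm d3))]; dsimp only; omega
        · rw [yD_mult _ _ (mk_ne' d2)]; dsimp only; omega
      · by_cases hcx : c = x
        · obtain rfl : x = c := hcx.symm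
          have hb : b = u ∨ b = v ∨ b = w :=
            wye_mem hw (by have := G.symm b x; omega)
          have hd : d = u ∨ d = v ∨ d = w := wye_mem hw (by omega)
          have t1 := triCount_NN hb hd d5
          refine hB1' ⟨⟨a, hax⟩, ⟨b, hbx⟩, ⟨d, wye_neN hw hd⟩,
            mk_ne' d1, mk_ne' d3, mk_ne' d5, ?_, ?_, ?_⟩
          · rw [yD_mult _ _ (mk_ne' d1)]; dsimp only; omega
          · rw [yD_mult _ _ (mk_ne' d5)]; dsimp only; omega
          · rw [yD_mult _ _ (mk_ne' (Ne.symm d3))]; dsimp only; omega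
        · by_cases hdx : d = x
          · obtain rfl : x = d := hdx.symm
            have hc : c = u ∨ c = v ∨ c = w :=
              wye_mem hw (by have := G.symm c x; omega)
            have ha : a = u ∨ a = v ∨ a = w := wye_mem hw (by omega)
            have t1 := triCount_NN hc ha (Ne.symm d2)
            refine hB1' ⟨⟨a, hax⟩, ⟨b, hbx⟩, ⟨c, hcx⟩,
              mk_ne' d1, mk_ne' d2, mk_ne' d4, ?_, ?_, ?_⟩
            · rw [yD_mult _ _ (mk_ne' d1)]; dsimp only; omega
            · rw [yD_mult _ _ (mk_ne' d4)]; dsimp only; omega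
            · rw [yD_mult _ _ (mk_ne' (Ne.symm d2))]; dsimp only; omega
          · refine hB2' ⟨⟨a, hax⟩, ⟨b, hbx⟩, ⟨c, hcx⟩, ⟨d, hdx⟩,
              mk_ne' d1, mk_ne' d2, mk_ne' d3, mk_ne' d4, mk_ne' d5,
              mk_ne' d6, ?_, ?_, ?_, ?_⟩
            · rw [yD_mult _ _ (mk_ne' d1)]; dsimp only; omega
            · rw [yD_mult _ _ (mk_ne' d4)]; dsimp only; omega
            · rw [yD_mult _ _ (mk_ne' d6)]; dsimp only; omega
            · rw [yD_mult _ _ (mk_ne' (Ne.symm d3))]; dsimp only; omega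
  · -- ¬ Bad3 G
    rintro ⟨a, b, c, d, e, d1, d2, d3, d4, d5, d6, d7, d8, d9, d10,
      m1, m2, m3, m4, m5⟩
    by_cases hax : a = x
    · obtain rfl : x = a := hax.symm
      have hb : b = u ∨ b = v ∨ b = w := wye_mem hw (by omega)
      have he : e = u ∨ e = v ∨ e = w :=
        wye_mem hw (by have := G.symm e x; omega)
      have t1 := triCount_NN he hb (Ne.symm d7)
      refine hB2' ⟨⟨b, wye_neN hw hb⟩, ⟨c, Ne.symm d2⟩, ⟨d, Ne.symm d3⟩,
        ⟨e, wye_neN hw he⟩, mk_ne' d5, mk_ne' d6, mk_ne' d7, mk_ne' d8,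
        mk_ne' d9, mk_ne' d10, ?_, ?_, ?_, ?_⟩
      · rw [yD_mult _ _ (mk_ne' d5)]; dsimp only; omega
      · rw [yD_mult _ _ (mk_ne' d8)]; dsimp only; omega
      · rw [yD_mult _ _ (mk_ne' d10)]; dsimp only; omega
      · rw [yD_mult _ _ (mk_ne' (Ne.symm d7))]; dsimp only; omega
    · by_cases hbx : b = x
      · obtain rfl : x = b := hbx.symm
        have hc : c = u ∨ c = v ∨ c = w := wye_mem hw (by omega)
        have ha : a = u ∨ a = v ∨ a = w :=
          wye_mem hw (by have := G.symm a x; omega)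
        have t1 := triCount_NN ha hc d2
        refine hB2' ⟨⟨c, wye_neN hw hc⟩, ⟨d, Ne.symm d6⟩, ⟨e, Ne.symm d7⟩,
          ⟨a, hax⟩, mk_ne' d8, mk_ne' d9, mk_ne' (Ne.symm d2), mk_ne' d10,
          mk_ne' (Ne.symm d3), mk_ne' (Ne.symm d4), ?_, ?_, ?_, ?_⟩
        · rw [yD_mult _ _ (mk_ne' d8)]; dsimp only; omega
        · rw [yD_mult _ _ (mk_ne' d10)]; dsimp only; omega
        · rw [yD_mult _ _ (mk_ne' (Ne.symm d4))]; dsimp only; omega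
        · rw [yD_mult _ _ (mk_ne' d2)]; dsimp only; omega
      · by_cases hcx : c = x
        · obtain rfl : x = c := hcx.symm
          have hd : d = u ∨ d = v ∨ d = w := wye_mem hw (by omega)
          have hb : b = u ∨ b = v ∨ b = w :=
            wye_mem hw (by have := G.symm b x; omega)
          have t1 := triCount_NN hb hd d6
          refine hB2' ⟨⟨d, wye_neN hw hd⟩, ⟨e, Ne.symm d9⟩, ⟨a, d2⟩,
            ⟨b, wye_neN hw hb⟩, mk_ne' d10, mk_ne' (Ne.symm d3),
            mk_ne' (Ne.symm d6), mk_ne' (Ne.symm d4), mk_ne' (Ne.symm d7),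
            mk_ne' d1, ?_, ?_, ?_, ?_⟩
          · rw [yD_mult _ _ (mk_ne' d10)]; dsimp only; omega
          · rw [yD_mult _ _ (mk_ne' (Ne.symm d4))]; dsimp only; omega
          · rw [yD_mult _ _ (mk_ne' d1)]; dsimp only; omega
          · rw [yD_mult _ _ (mk_ne' d6)]; dsimp only; omega
        · by_cases hdx : d = x
          · obtain rfl : x = d := hdx.symm
            have he : e = u ∨ e = v ∨ e = w := wye_mem hw (by omega)
            have hc : c = u ∨ c = v ∨ c = w :=
              wye_mem hw (by have := G.symm c x; omega)
            have t1 := triCount_NN hc he d9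
            refine hB2' ⟨⟨e, wye_neN hw he⟩, ⟨a, d3⟩, ⟨b, d6⟩,
              ⟨c, wye_neN hw hc⟩, mk_ne' (Ne.symm d4), mk_ne' (Ne.symm d7),
              mk_ne' (Ne.symm d9), mk_ne' d1, mk_ne' d2, mk_ne' d5,
              ?_, ?_, ?_, ?_⟩
            · rw [yD_mult _ _ (mk_ne' (Ne.symm d4))]; dsimp only; omega
            · rw [yD_mult _ _ (mk_ne' d1)]; dsimp only; omega
            · rw [yD_mult _ _ (mk_ne' d5)]; dsimp only; omega
            · rw [yD_mult _ _ (mk_ne' d9)]; dsimp only; omega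
          · by_cases hex : e = x
            · obtain rfl : x = e := hex.symm
              have ha : a = u ∨ a = v ∨ a = w := wye_mem hw (by omega)
              have hd : d = u ∨ d = v ∨ d = w :=
                wye_mem hw (by have := G.symm d x; omega)
              have t1 := triCount_NN hd ha (Ne.symm d3)
              refine hB2' ⟨⟨a, hax⟩, ⟨b, hbx⟩, ⟨c, hcx⟩, ⟨d, wye_neN hw hd⟩,
                mk_ne' d1, mk_ne' d2, mk_ne' d3, mk_ne' d5, mk_ne' d6,
                mk_ne' d8, ?_, ?_, ?_, ?_⟩
              · rw [yD_mult _ _ (mk_ne' d1)]; dsimp only; omega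
              · rw [yD_mult _ _ (mk_ne' d5)]; dsimp only; omega
              · rw [yD_mult _ _ (mk_ne' d8)]; dsimp only; omega
              · rw [yD_mult _ _ (mk_ne' (Ne.symm d3))]; dsimp only; omega
            · refine hB3' ⟨⟨a, hax⟩, ⟨b, hbx⟩, ⟨c, hcx⟩, ⟨d, hdx⟩, ⟨e, hex⟩,
                mk_ne' d1, mk_ne' d2, mk_ne' d3, mk_ne' d4, mk_ne' d5,
                mk_ne' d6, mk_ne' d7, mk_ne' d8, mk_ne' d9, mk_ne' d10,
                ?_, ?_, ?_, ?_, ?_⟩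
              · rw [yD_mult _ _ (mk_ne' d1)]; dsimp only; omega
              · rw [yD_mult _ _ (mk_ne' d5)]; dsimp only; omega
              · rw [yD_mult _ _ (mk_ne' d8)]; dsimp only; omega
              · rw [yD_mult _ _ (mk_ne' d10)]; dsimp only; omega
              · rw [yD_mult _ _ (mk_ne' (Ne.symm d4))]; dsimp only; omega

end YYDeltaBack

end MG
namespace MG

section DeltaYYBack

variable {G : MG} {u v w : G.V}

private lemma ne_some' {α : Type} {a b : α} (h : a ≠ b) :
    (some a : Option α) ≠ some b := fun hh => h (Option.some.inj hh)

/-- Backward preservation for Δ-YY. -/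
lemma Inv.ofDeltaYY (hd : G.IsDelta u v w)
    (hI : Inv (G.deltaYY u v w)) : Inv G := by
  obtain ⟨hm', hB1', hB2', hB3'⟩ := hI
  obtain ⟨huv, huw, hvw, a1, a2, a3⟩ := id hd
  have a1' : 1 ≤ G.mult u v := a1
  have a2' : 1 ≤ G.mult u w := a2
  have a3' : 1 ≤ G.mult v w := a3
  have e1 : G.mult u v = 1 := by
    rcases Nat.lt_or_ge (G.mult u v) 2 with h | h
    · omega
    · refine absurd ?_ hB1'
      refine ⟨none, some u, some v, (Option.some_ne_none u).symm,
        (Option.some_ne_none v).symm, ne_some' huv, ?_, ?_, ?_⟩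
      · exact (dYY_ns_two (show u = u ∨ u = v ∨ u = w from Or.inl rfl)).ge
      · rw [dYY_ss]; have := triCount_le_one u v w u v; omega
      · have := dYY_sn_two (show v = u ∨ v = v ∨ v = w from
          Or.inr (Or.inl rfl)) (G := G)
        omega
  have e2 : G.mult u w = 1 := by
    rcases Nat.lt_or_ge (G.mult u w) 2 with h | h
    · omega
    · refine absurd ?_ hB1'
      refine ⟨none, some u, some w, (Option.some_ne_none u).symm,
        (Option.some_ne_none w).symm, ne_some' huw, ?_, ?_, ?_⟩
      · exact (dYY_ns_two (show u = u ∨ u = v ∨ u = w from Or.inl rfl)).ge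
      · rw [dYY_ss]; have := triCount_le_one u v w u w; omega
      · have := dYY_sn_two (show w = u ∨ w = v ∨ w = w from
          Or.inr (Or.inr rfl)) (G := G)
        omega
  have e3 : G.mult v w = 1 := by
    rcases Nat.lt_or_ge (G.mult v w) 2 with h | h
    · omega
    · refine absurd ?_ hB1'
      refine ⟨none, some v, some w, (Option.some_ne_none v).symm,
        (Option.some_ne_none w).symm, ne_some' hvw, ?_, ?_, ?_⟩
      · exact (dYY_ns_two (show v = u ∨ v = v ∨ v = w from
          Or.inr (Or.inl rfl))).ge
      · rw [dYY_ss]; have := triCount_le_one u v w v w; omega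
      · have := dYY_sn_two (show w = u ∨ w = v ∨ w = w from
          Or.inr (Or.inr rfl)) (G := G)
        omega
  have hp1 : ∀ p q : G.V, (p = u ∨ p = v ∨ p = w) →
      (q = u ∨ q = v ∨ q = w) → p ≠ q → G.mult p q = 1 := by
    have s1 := G.symm u v
    have s2 := G.symm u w
    have s3 := G.symm v w
    rintro p q (rfl | rfl | rfl) (rfl | rfl | rfl) hpq <;>
      first
        | exact absurd rfl hpq
        | omega
  refine ⟨?_, ?_, ?_, ?_⟩
  · -- mult ≤ 2
    intro a b
    by_cases hab : a = b
    · subst hab; rw [G.loopless]; omega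
    · by_cases hp : (a = u ∨ a = v ∨ a = w) ∧ (b = u ∨ b = v ∨ b = w)
      · have := hp1 a b hp.1 hp.2 hab; omega
      · have h2 := hm' (some a) (some b)
        rw [dYY_ss] at h2
        have t0 := triCount_not_NN (u := u) (v := v) (w := w) hp
        omega
  · -- ¬ Bad1 G
    rintro ⟨a, b, c, d1, d2, d3, m1, m2, m3⟩
    by_cases pab : (a = u ∨ a = v ∨ a = w) ∧ (b = u ∨ b = v ∨ b = w)
    · have := hp1 a b pab.1 pab.2 d1; omega
    · have tab := triCount_not_NN (u := u) (v := v) (w := w) pab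
      by_cases pbc : (b = u ∨ b = v ∨ b = w) ∧ (c = u ∨ c = v ∨ c = w)
      · have hna : ¬(a = u ∨ a = v ∨ a = w) := fun h => pab ⟨h, pbc.1⟩
        have tca : triCount u v w c a = 0 :=
          triCount_not_NN (fun hh => hna hh.2)
        refine hB2' ⟨some a, some b, none, some c, ne_some' d1,
          Option.some_ne_none a, ne_some' d2, Option.some_ne_none b,
          ne_some' d3, (Option.some_ne_none c).symm, ?_, ?_, ?_, ?_⟩
        · rw [dYY_ss]; omega
        · exact (dYY_sn_two pbc.1).ge
        · exact (dYY_ns_two pbc.2).ge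
        · rw [dYY_ss]; omega
      · have tbc := triCount_not_NN (u := u) (v := v) (w := w) pbc
        by_cases pca : (c = u ∨ c = v ∨ c = w) ∧ (a = u ∨ a = v ∨ a = w)
        · have hnb : ¬(b = u ∨ b = v ∨ b = w) := fun h => pab ⟨pca.2, h⟩
          have tba : triCount u v w b a = 0 :=
            triCount_not_NN (fun hh => hnb hh.1)
          have tcb : triCount u v w c b = 0 :=
            triCount_not_NN (fun hh => hnb hh.2)
          have sab := G.symm a b
          have sbc := G.symm b c
          refine hB2' ⟨some b, some a, none, some c, ne_some' (Ne.symm d1),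
            Option.some_ne_none b, ne_some' d3, Option.some_ne_none a,
            ne_some' d2, (Option.some_ne_none c).symm, ?_, ?_, ?_, ?_⟩
          · rw [dYY_ss]; omega
          · exact (dYY_sn_two pca.2).ge
          · exact (dYY_ns_two pca.1).ge
          · rw [dYY_ss]; omega
        · have tca := triCount_not_NN (u := u) (v := v) (w := w) pca
          refine hB1' ⟨some a, some b, some c, ne_some' d1, ne_some' d2,
            ne_some' d3, ?_, ?_, ?_⟩ <;> (rw [dYY_ss]; omega)
  · -- ¬ Bad2 G
    rintro ⟨a, b, c, d, d1, d2, d3, d4, d5, d6, m1, m2, m3, m4⟩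
    have nab : ¬((a = u ∨ a = v ∨ a = w) ∧ (b = u ∨ b = v ∨ b = w)) := by
      intro hh; have := hp1 a b hh.1 hh.2 d1; omega
    have nbc : ¬((b = u ∨ b = v ∨ b = w) ∧ (c = u ∨ c = v ∨ c = w)) := by
      intro hh; have := hp1 b c hh.1 hh.2 d4; omega
    have ncd : ¬((c = u ∨ c = v ∨ c = w) ∧ (d = u ∨ d = v ∨ d = w)) := by
      intro hh; have := hp1 c d hh.1 hh.2 d6; omega
    have tab := triCount_not_NN (u := u) (v := v) (w := w) nab
    have tbc := triCount_not_NN (u := u) (v := v) (w := w) nbc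
    have tcd := triCount_not_NN (u := u) (v := v) (w := w) ncd
    by_cases pda : (d = u ∨ d = v ∨ d = w) ∧ (a = u ∨ a = v ∨ a = w)
    · refine hB3' ⟨none, some a, some b, some c, some d,
        (Option.some_ne_none a).symm, (Option.some_ne_none b).symm,
        (Option.some_ne_none c).symm, (Option.some_ne_none d).symm,
        ne_some' d1, ne_some' d2, ne_some' d3, ne_some' d4, ne_some' d5,
        ne_some' d6, ?_, ?_, ?_, ?_, ?_⟩
      · exact (dYY_ns_two pda.2).ge
      · rw [dYY_ss]; omega
      · rw [dYY_ss]; omega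
      · rw [dYY_ss]; omega
      · exact (dYY_sn_two pda.1).ge
    · have tda := triCount_not_NN (u := u) (v := v) (w := w) pda
      refine hB2' ⟨some a, some b, some c, some d, ne_some' d1, ne_some' d2,
        ne_some' d3, ne_some' d4, ne_some' d5, ne_some' d6,
        ?_, ?_, ?_, ?_⟩ <;> (rw [dYY_ss]; omega)
  · -- ¬ Bad3 G
    rintro ⟨a, b, c, d, e, d1, d2, d3, d4, d5, d6, d7, d8, d9, d10,
      m1, m2, m3, m4, m5⟩
    have nab : ¬((a = u ∨ a = v ∨ a = w) ∧ (b = u ∨ b = v ∨ b = w)) := by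
      intro hh; have := hp1 a b hh.1 hh.2 d1; omega
    have nbc : ¬((b = u ∨ b = v ∨ b = w) ∧ (c = u ∨ c = v ∨ c = w)) := by
      intro hh; have := hp1 b c hh.1 hh.2 d5; omega
    have ncd : ¬((c = u ∨ c = v ∨ c = w) ∧ (d = u ∨ d = v ∨ d = w)) := by
      intro hh; have := hp1 c d hh.1 hh.2 d8; omega
    have nde : ¬((d = u ∨ d = v ∨ d = w) ∧ (e = u ∨ e = v ∨ e = w)) := by
      intro hh; have := hp1 d e hh.1 hh.2 d10; omega
    have nea : ¬((e = u ∨ e = v ∨ e = w) ∧ (a = u ∨ a = v ∨ a = w)) := by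
      intro hh; have := hp1 e a hh.1 hh.2 (Ne.symm d4); omega
    have tab := triCount_not_NN (u := u) (v := v) (w := w) nab
    have tbc := triCount_not_NN (u := u) (v := v) (w := w) nbc
    have tcd := triCount_not_NN (u := u) (v := v) (w := w) ncd
    have tde := triCount_not_NN (u := u) (v := v) (w := w) nde
    have tea := triCount_not_NN (u := u) (v := v) (w := w) nea
    refine hB3' ⟨some a, some b, some c, some d, some e, ne_some' d1,
      ne_some' d2, ne_some' d3, ne_some' d4, ne_some' d5, ne_some' d6,
      ne_some' d7, ne_some' d8, ne_some' d9, ne_some' d10,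
      ?_, ?_, ?_, ?_, ?_⟩ <;> (rw [dYY_ss]; omega)

end DeltaYYBack

end MG
namespace MG

lemma Inv.iffOfIso {G H : MG} (h : Iso G H) : Inv G ↔ Inv H :=
  ⟨Inv.ofIso h, Inv.ofIso (Iso.symmIso h)⟩

lemma Inv.iffOfStep {G G' : MG} (h : Step G G' ∨ Iso G G') :
    Inv G ↔ Inv G' := by
  rcases h with (⟨u, v, w, hd, hiso⟩ | ⟨x, u, v, w, hw, hiso⟩) | hiso
  · exact ⟨fun hI => Inv.ofIso hiso (hI.deltaYY hd),
      fun hI => Inv.ofDeltaYY hd (Inv.ofIso (Iso.symmIso hiso) hI)⟩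
  · exact ⟨fun hI => Inv.ofIso hiso (hI.yyDelta hw),
      fun hI => Inv.ofYyDelta hw (Inv.ofIso (Iso.symmIso hiso) hI)⟩
  · exact Inv.iffOfIso hiso

lemma Inv.ofDYYEquiv {G H : MG} (h : DYYEquiv G H) : Inv G ↔ Inv H := by
  induction h with
  | rel _ _ h => exact Inv.iffOfStep h
  | refl _ => exact Iff.rfl
  | symm _ _ _ ih => exact ih.symm
  | trans _ _ _ _ _ ih1 ih2 => exact ih1.trans ih2

end MG

/-- If `G` is a simple 6-regular graph, then every multigraph in
the Δ-YY equivalence class of `G` has all connections of size at most 2. -/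
theorem stmt_19 (G H : MG) (hs : G.Simple) (h6 : G.Regular 6)
    (h : MG.DYYEquiv G H) : ∀ u v : H.V, H.mult u v ≤ 2 := by
  have hInvG : MG.Inv G := by
    refine ⟨fun a b => by have := hs a b; omega, ?_, ?_, ?_⟩
    · rintro ⟨a, b, c, -, -, -, m1, -, -⟩
      have := hs a b; omega
    · rintro ⟨a, b, c, d, -, -, -, -, -, -, m1, -, -, -⟩
      have := hs a b; omega
    · rintro ⟨a, b, c, d, e, -, -, -, -, -, -, -, -, -, -, m1, -, -, -, -⟩
      have := hs a b; omega
  have hInvH : MG.Inv H := (MG.Inv.ofDYYEquiv h).mp hInvG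
  exact fun a b => hInvH.1 a b
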